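/- Let V = {1,…,n} and let λ = (λ_1,…,λ_k) be an integer sequence with 0 < λ_1 < ⋯ < λ_k ≤ n. If the symmetric hypergraph 𝓗(λ) is minimal transversal-free, then λ_1 + λ_k = n. -/

import Mathlib

open Finset

/-- An `H`-move in hypergraph NIM: strictly decrease every pile in `H`, keep others. -/
def HMove {n : ℕ} (H : Finset (Fin n)) (x x' : Fin n → ℕ) : Prop :=
  (∀ i ∈ H, x' i < x i) ∧ ∀ i ∉ H, x' i = x i

/-- A move in `NIM_𝓗`: an `H`-move for some hyperedge `H ∈ 𝓗`. -/
def Move {n : ℕ} (F : Set (Finset (Fin n))) (x x' : Fin n → ℕ) : Prop :=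
  ∃ H ∈ F, HMove H x x'

/-- Minimal excludant of a set of naturals. -/
noncomputable def mex (S : Set ℕ) : ℕ := sInf {g : ℕ | g ∉ S}

/-- The Sprague–Grundy function of `NIM_𝓗`, defined by well-founded recursion.
(The guard `∑ x' < ∑ x` is automatic whenever `∅ ∉ 𝓗`.) -/
noncomputable def grundy {n : ℕ} (F : Set (Finset (Fin n))) (x : Fin n → ℕ) : ℕ :=
  mex {g : ℕ | ∃ x', ∃ _h : Move F x x' ∧ (∑ i, x' i) < ∑ i, x i, grundy F x' = g}
termination_by ∑ i, x i
decreasing_by exact _h.2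

/-- `N` consecutive moves are possible from `x`: there are hyperedges `H¹,…,H^N ∈ 𝓗`
whose partial sums of characteristic vectors stay `≤ x`. -/
def TetrisReach {n : ℕ} (F : Set (Finset (Fin n))) (x : Fin n → ℕ) (N : ℕ) : Prop :=
  ∃ f : ℕ → Finset (Fin n), (∀ j < N, f j ∈ F) ∧
    ∀ j < N, ∀ i, (∑ l ∈ Finset.range (j + 1), if i ∈ f l then 1 else 0) ≤ x i

/-- The Tetris function: the largest `N` with `TetrisReach`. -/
noncomputable def tetris {n : ℕ} (F : Set (Finset (Fin n))) (x : Fin n → ℕ) : ℕ :=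
  sSup {N | TetrisReach F x N}

/-- `m(x)`: the minimum pile size. -/
noncomputable def mval {n : ℕ} (x : Fin n → ℕ) : ℕ := sInf (Set.range x)

/-- `y_𝓗(x) = 𝒯_𝓗(x − m(x)e) + 1`. -/
noncomputable def yval {n : ℕ} (F : Set (Finset (Fin n))) (x : Fin n → ℕ) : ℕ :=
  tetris F (fun i => x i - mval x) + 1

/-- `v_𝓗(x)`. -/
noncomputable def vval {n : ℕ} (F : Set (Finset (Fin n))) (x : Fin n → ℕ) : ℕ :=
  Nat.choose (yval F x) 2 + ((mval x - Nat.choose (yval F x) 2 - 1) % yval F x)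

/-- A position is long if `m(x) ≤ C(y_𝓗(x), 2)`. -/
noncomputable def IsLong {n : ℕ} (F : Set (Finset (Fin n))) (x : Fin n → ℕ) : Prop :=
  mval x ≤ Nat.choose (yval F x) 2

/-- The Jenkyns–Mayberry function `𝒰_𝓗`. -/
noncomputable def jmU {n : ℕ} (F : Set (Finset (Fin n))) (x : Fin n → ℕ) : ℕ :=
  if mval x ≤ Nat.choose (yval F x) 2 then tetris F x else vval F x

/-- `𝓗` is a JM hypergraph if its SG function is given by the JM formula. -/
def IsJM {n : ℕ} (F : Set (Finset (Fin n))) : Prop :=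
  ∀ x : Fin n → ℕ, grundy F x = jmU F x

/-- `T` is a transversal of `𝓗` if it meets every hyperedge. -/
def IsTransversal {n : ℕ} (F : Set (Finset (Fin n))) (T : Finset (Fin n)) : Prop :=
  ∀ H ∈ F, (T ∩ H).Nonempty

/-- `𝓗` is transversal-free if no hyperedge is a transversal. -/
def TransversalFree {n : ℕ} (F : Set (Finset (Fin n))) : Prop :=
  ∀ H ∈ F, ¬ IsTransversal F H

/-- The induced subhypergraph `𝓗_S`. -/
def inducedH {n : ℕ} (F : Set (Finset (Fin n))) (S : Finset (Fin n)) : Set (Finset (Fin n)) :=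
  {H | H ∈ F ∧ H ⊆ S}

/-- `𝓗` is minimal transversal-free. -/
def MinTransversalFree {n : ℕ} (F : Set (Finset (Fin n))) : Prop :=
  TransversalFree F ∧
    ∀ S : Finset (Fin n), S ⊂ Finset.univ → (inducedH F S).Nonempty →
      ¬ TransversalFree (inducedH F S)

/-- The symmetric hypergraph `𝓗(λ)` of a spectrum `λ₁ < ⋯ < λ_k` (1-indexed). -/
def Hlambda {n : ℕ} (k : ℕ) (gl : ℕ → ℕ) : Set (Finset (Fin n)) :=
  {H | ∃ j, 1 ≤ j ∧ j ≤ k ∧ H.card = gl j}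


lemma glmono_aux (k : ℕ) (gl : ℕ → ℕ)
    (hmono : ∀ i, 1 ≤ i → i < k → gl i < gl (i + 1)) :
    ∀ a b, 1 ≤ a → a ≤ b → b ≤ k → gl a ≤ gl b := by
  intro a b ha hab hbk
  induction b with
  | zero => omega
  | succ b ih =>
    rcases Nat.eq_or_lt_of_le hab with h | h
    · exact le_of_eq (congrArg gl h)
    · have hab' : a ≤ b := by omega
      have hstep : gl b < gl (b + 1) := hmono b (by omega) (by omega)
      exact (ih hab' (by omega)).trans hstep.le

/-- If `𝓗(λ)` is minimal transversal-free, then `λ_1 + λ_k = n`. -/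
theorem Hlambda_minTransversalFree_sum
    (n k : ℕ) (gl : ℕ → ℕ) (hk : 1 ≤ k) (hpos : 0 < gl 1)
    (hmono : ∀ i, 1 ≤ i → i < k → gl i < gl (i + 1)) (hle : gl k ≤ n)
    (hmin : MinTransversalFree (Hlambda (n := n) k gl)) :
    gl 1 + gl k = n := by
  have hmon := glmono_aux k gl hmono
  have h1k : gl 1 ≤ gl k := hmon 1 k le_rfl hk le_rfl
  have hn : 1 ≤ n := by omega
  -- Step A: gl 1 + gl k ≤ n
  have hA : gl 1 + gl k ≤ n := by
    obtain ⟨H, hHsub, hHcard⟩ := Finset.exists_subset_card_eq (s := (Finset.univ : Finset (Fin n))) (n := gl k)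
      (by simpa using hle)
    have hHF : H ∈ Hlambda (n := n) k gl := ⟨k, hk, le_rfl, hHcard⟩
    have hnt := hmin.1 H hHF
    rw [IsTransversal] at hnt; push_neg at hnt
    obtain ⟨H', hH'F, hdisj⟩ := hnt
    obtain ⟨j, hj1, hjk, hcard'⟩ := hH'F
    have h1j : gl 1 ≤ gl j := hmon 1 j le_rfl hj1 hjk
    have hd : Disjoint H H' :=
      Finset.disjoint_iff_inter_eq_empty.mpr hdisj
    have hcardsum : H.card + H'.card ≤ n := by
      rw [← Finset.card_union_of_disjoint hd]
      calc (H ∪ H').card ≤ (Finset.univ : Finset (Fin n)).card :=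
            Finset.card_le_card (Finset.subset_univ _)
        _ = n := by simp
    omega
  -- Step B: gl 1 + gl k ≥ n
  by_contra hne
  have hlt : gl 1 + gl k ≤ n - 1 := by omega
  have i₀ : Fin n := ⟨0, hn⟩
  set S := (Finset.univ : Finset (Fin n)).erase i₀ with hSdef
  have hScard : S.card = n - 1 := by
    rw [hSdef, Finset.card_erase_of_mem (Finset.mem_univ _)]
    simp
  have hSss : S ⊂ Finset.univ := Finset.erase_ssubset (Finset.mem_univ _)
  obtain ⟨H0, hH0S, hH0c⟩ := Finset.exists_subset_card_eq (s := S) (n := gl 1) (by omega)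
  have hind : (inducedH (Hlambda (n := n) k gl) S).Nonempty :=
    ⟨H0, ⟨1, le_rfl, hk, hH0c⟩, hH0S⟩
  have hntf := hmin.2 S hSss hind
  rw [TransversalFree] at hntf; push_neg at hntf
  obtain ⟨H, hHind, hHtr⟩ := hntf
  obtain ⟨⟨j, hj1, hjk, hHc⟩, hHS⟩ := hHind
  have hjle : gl j ≤ gl k := hmon j k hj1 hjk le_rfl
  have hsd : (S \ H).card = S.card - H.card := Finset.card_sdiff_of_subset hHS
  obtain ⟨H', hH'sub, hH'c⟩ := Finset.exists_subset_card_eq (s := S \ H) (n := gl 1) (by omega)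
  have hH'ind : H' ∈ inducedH (Hlambda (n := n) k gl) S :=
    ⟨⟨1, le_rfl, hk, hH'c⟩, hH'sub.trans (Finset.sdiff_subset)⟩
  obtain ⟨x, hx⟩ := hHtr H' hH'ind
  have hx' := Finset.mem_inter.mp hx
  exact (Finset.mem_sdiff.mp (hH'sub hx'.2)).2 hx'.1
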